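/- There exists a constant c_l > 0 such that for all n ≥ 1 and all x ∈ [−√n, √n], the density f(x, n) of the sum of n i.i.d. Uniform[−1,1] random variables satisfies f(x, n) ≥ c_l / √n. -/

import Mathlib

/-- The density of the Uniform[-1,1] distribution. -/
noncomputable def unifDensity (x : ℝ) : ℝ :=
  if x ∈ Set.Icc (-1 : ℝ) 1 then 1 / 2 else 0

/-- `sumUnifDensity n` is the density of the sum of `n` i.i.d. Uniform[-1,1]
random variables, defined (for `n ≥ 1`) as the `n`-fold convolution of the
Uniform[-1,1] density with itself. -/
noncomputable def sumUnifDensity : ℕ → ℝ → ℝ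
  | 0, _ => 0
  | 1, x => unifDensity x
  | (n + 2), x => ∫ τ : ℝ, sumUnifDensity (n + 1) (x - τ) * unifDensity τ

open MeasureTheory Real Set

local notation "F" => sumUnifDensity

lemma unif_nonneg (x : ℝ) : 0 ≤ unifDensity x := by
  unfold unifDensity; split <;> norm_num

lemma unif_le (x : ℝ) : unifDensity x ≤ 1/2 := by
  unfold unifDensity; split <;> norm_num

lemma unif_meas : Measurable unifDensity := by
  unfold unifDensity
  exact Measurable.ite measurableSet_Icc measurable_const measurable_const

lemma unif_zero {x : ℝ} (h : 1 < |x|) : unifDensity x = 0 := by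
  unfold unifDensity
  rw [if_neg]
  simp only [Set.mem_Icc, not_and_or, not_le]
  rcases lt_abs.mp h with h' | h'
  · right; exact h'
  · left; linarith
lemma unif_eq_indicator : unifDensity = Set.indicator (Set.Icc (-1:ℝ) 1) (fun _ => (1:ℝ)/2) := by
  funext x; rw [unifDensity, Set.indicator]; split <;> simp_all

lemma F_succ (n : ℕ) (hn : 1 ≤ n) (x : ℝ) :
    F (n+1) x = ∫ τ : ℝ, F n (x - τ) * unifDensity τ := by
  obtain ⟨m, rfl⟩ := Nat.exists_eq_add_of_le' hn
  rfl

lemma integral_unif : ∫ τ : ℝ, unifDensity τ = 1 := by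
  rw [unif_eq_indicator, MeasureTheory.integral_indicator measurableSet_Icc]
  simp [Real.volume_Icc]
  norm_num

lemma indicator_const_integrable (a b C : ℝ) :
    Integrable ((Set.Icc a b).indicator (fun _ => C)) := by
  rw [MeasureTheory.integrable_indicator_iff measurableSet_Icc]
  refine (integrableOn_const_iff (by simp)).mpr ?_
  right
  rw [Real.volume_Icc]
  exact ENNReal.ofReal_lt_top

lemma abs_gt_of_not_mem_Icc {a x : ℝ} (hx : x ∉ Set.Icc (-a) a) : a < |x| := by
  simp only [Set.mem_Icc, not_and_or, not_le] at hx
  rcases hx with h | h <;> rw [lt_abs] <;> [right; left] <;> linarith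

lemma unif_integrable : Integrable unifDensity := by
  rw [unif_eq_indicator]
  exact indicator_const_integrable _ _ _

lemma integrable_of_bound (f : ℝ → ℝ) (hm : Measurable f) (a C : ℝ)
    (hC : ∀ x, |f x| ≤ C) (hs : ∀ x, a < |x| → f x = 0) : Integrable f := by
  apply Integrable.mono' (indicator_const_integrable (-a) a C) hm.aestronglyMeasurable
  filter_upwards with x
  by_cases hx : x ∈ Set.Icc (-a) a
  · rw [Set.indicator_of_mem hx]; exact hC x
  · rw [Set.indicator_of_notMem hx, hs x (abs_gt_of_not_mem_Icc hx)]
    simp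

def Good (n : ℕ) : Prop :=
  Measurable (F n) ∧ (∀ x, 0 ≤ F n x) ∧ (∀ x, F n x ≤ 1/2) ∧
    (∀ x : ℝ, (n : ℝ) < |x| → F n x = 0)

lemma good_one : Good 1 := by
  refine ⟨unif_meas, unif_nonneg, unif_le, ?_⟩
  intro x hx
  exact unif_zero (by exact_mod_cast hx)

lemma good_succ (n : ℕ) (hn : 1 ≤ n) (h : Good n) : Good (n+1) := by
  obtain ⟨hm, h0, hhalf, hsupp⟩ := h
  have meas2 : Measurable (fun p : ℝ × ℝ => F n (p.1 - p.2) * unifDensity p.2) :=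
    (hm.comp (measurable_fst.sub measurable_snd)).mul (unif_meas.comp measurable_snd)
  refine ⟨?_, ?_, ?_, ?_⟩
  · have := (meas2.stronglyMeasurable.integral_prod_right'
      (ν := (volume : Measure ℝ))).measurable
    have heq : (fun x => ∫ τ : ℝ, F n (x - τ) * unifDensity τ) = F (n+1) := by
      funext x; rw [F_succ n hn]
    rwa [heq] at this
  · intro x
    rw [F_succ n hn]
    exact integral_nonneg fun τ => mul_nonneg (h0 _) (unif_nonneg _)
  · intro x
    rw [F_succ n hn]
    calc ∫ τ : ℝ, F n (x - τ) * unifDensity τ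
        ≤ ∫ τ : ℝ, (1/2) * unifDensity τ := by
          apply integral_mono_of_nonneg
          · filter_upwards with τ; exact mul_nonneg (h0 _) (unif_nonneg _)
          · exact unif_integrable.const_mul _
          · filter_upwards with τ
            exact mul_le_mul_of_nonneg_right (hhalf _) (unif_nonneg _)
      _ = 1/2 := by rw [integral_const_mul, integral_unif, mul_one]
  · intro x hx
    rw [F_succ n hn]
    have : (fun τ => F n (x - τ) * unifDensity τ) = fun _ => (0:ℝ) := by
      funext τ
      by_cases hτ : 1 < |τ|
      · rw [unif_zero hτ, mul_zero]
      · push_neg at hτ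
        rw [hsupp (x - τ) ?_, zero_mul]
        have : (n:ℝ) + 1 < |x| := by push_cast at hx ⊢; linarith
        calc (n:ℝ) < |x| - 1 := by linarith
          _ ≤ |x| - |τ| := by linarith
          _ ≤ |x - τ| := by
              have := abs_sub_abs_le_abs_sub x τ; linarith
    rw [this, integral_zero]

lemma good (n : ℕ) (hn : 1 ≤ n) : Good n := by
  induction n, hn using Nat.le_induction with
  | base => exact good_one
  | succ n hn ih => exact good_succ n hn ih

lemma F_meas (n : ℕ) (hn : 1 ≤ n) : Measurable (F n) := (good n hn).1
lemma F_nonneg (n : ℕ) (hn : 1 ≤ n) (x : ℝ) : 0 ≤ F n x := (good n hn).2.1 x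
lemma F_half (n : ℕ) (hn : 1 ≤ n) (x : ℝ) : F n x ≤ 1/2 := (good n hn).2.2.1 x
lemma F_supp (n : ℕ) (hn : 1 ≤ n) (x : ℝ) (h : (n:ℝ) < |x|) : F n x = 0 := (good n hn).2.2.2 x h

lemma F_mul_integrable (n : ℕ) (hn : 1 ≤ n) (g : ℝ → ℝ) (hg : Continuous g) :
    Integrable (fun x => g x * F n x) := by
  obtain ⟨C, hC⟩ := (isCompact_Icc (a := -(n:ℝ)) (b := n)).exists_bound_of_continuousOn
    hg.continuousOn
  apply integrable_of_bound _ ((hg.measurable).mul (F_meas n hn)) n (|C| * (1/2))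
  · intro x
    by_cases hx : x ∈ Set.Icc (-(n:ℝ)) n
    · rw [Pi.mul_apply, abs_mul]
      apply mul_le_mul ((hC x hx).trans (le_abs_self C)) _ (abs_nonneg _) (abs_nonneg _)
      rw [abs_of_nonneg (F_nonneg n hn x)]; exact F_half n hn x
    · rw [Pi.mul_apply, F_supp n hn x (abs_gt_of_not_mem_Icc hx), mul_zero, abs_zero]
      positivity
  · intro x hx
    rw [Pi.mul_apply, F_supp n hn x hx, mul_zero]

lemma F_integrable (n : ℕ) (hn : 1 ≤ n) : Integrable (F n) := by
  simpa using F_mul_integrable n hn (fun _ => 1) continuous_const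

lemma F_succ' (n : ℕ) (hn : 1 ≤ n) (x : ℝ) :
    F (n+1) x = ∫ t : ℝ, F n t * unifDensity (x - t) := by
  rw [F_succ n hn]
  have h : (fun τ => F n (x - τ) * unifDensity τ)
      = fun τ => (fun t => F n t * unifDensity (x - t)) (x - τ) := by
    funext τ; simp
  rw [h, MeasureTheory.integral_sub_left_eq_self (fun t => F n t * unifDensity (x - t)) volume x]

lemma indicator_const_integrable2 (a b C : ℝ) :
    Integrable ((Set.Icc (-a) a ×ˢ Set.Icc (-b) b).indicator (fun _ => C))
      ((volume : Measure ℝ).prod volume) := by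
  rw [MeasureTheory.integrable_indicator_iff (measurableSet_Icc.prod measurableSet_Icc)]
  refine (integrableOn_const_iff (by simp)).mpr ?_
  right
  rw [Measure.prod_prod, Real.volume_Icc, Real.volume_Icc]
  exact ENNReal.mul_lt_top ENNReal.ofReal_lt_top ENNReal.ofReal_lt_top

lemma unif_slice (t : ℝ) (k : ℕ) :
    ∫ x : ℝ, x ^ k * unifDensity (x - t)
      = ((t+1)^(k+1) - (t-1)^(k+1)) / (2*(k+1)) := by
  have h : (fun x : ℝ => x ^ k * unifDensity (x - t))
      = (Set.Icc (t-1) (t+1)).indicator (fun x => x ^ k * (1/2)) := by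
    funext x
    rw [unifDensity, Set.indicator]
    by_cases hx : x ∈ Set.Icc (t-1) (t+1)
    · rw [if_pos hx, if_pos]
      simp only [Set.mem_Icc] at hx ⊢
      constructor <;> linarith [hx.1, hx.2]
    · rw [if_neg hx, if_neg, mul_zero]
      simp only [Set.mem_Icc] at hx ⊢
      intro hc
      exact hx ⟨by linarith [hc.1], by linarith [hc.2]⟩
  rw [h, MeasureTheory.integral_indicator measurableSet_Icc,
    MeasureTheory.integral_Icc_eq_integral_Ioc,
    ← intervalIntegral.integral_of_le (by linarith : t - 1 ≤ t + 1)]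
  rw [intervalIntegral.integral_mul_const, integral_pow]
  have hk : ((k:ℝ)+1) ≠ 0 := by positivity
  field_simp

lemma mom_rec (n : ℕ) (hn : 1 ≤ n) (k : ℕ) :
    ∫ x : ℝ, x ^ k * F (n+1) x
      = ∫ t : ℝ, F n t * (((t+1)^(k+1) - (t-1)^(k+1)) / (2*(k+1))) := by
  have h0 := good n hn
  obtain ⟨hm, hnn, hhalf, hsupp⟩ := h0
  have key : ∫ x : ℝ, ∫ t : ℝ, x ^ k * (F n t * unifDensity (x - t))
      = ∫ t : ℝ, ∫ x : ℝ, x ^ k * (F n t * unifDensity (x - t)) := by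
    apply MeasureTheory.integral_integral_swap
    have hmeas : Measurable (Function.uncurry fun x t : ℝ =>
        x ^ k * (F n t * unifDensity (x - t))) := by
      apply ((measurable_fst.pow_const k).mul _)
      exact (hm.comp measurable_snd).mul (unif_meas.comp (measurable_fst.sub measurable_snd))
    apply Integrable.mono'
      (indicator_const_integrable2 ((n:ℝ)+1) n (((n:ℝ)+1)^k * (1/4)))
      hmeas.aestronglyMeasurable
    filter_upwards with p
    rcases p with ⟨x, t⟩
    simp only [Function.uncurry]
    by_cases ht : (n:ℝ) < |t|
    · rw [hsupp t ht, zero_mul, mul_zero, norm_zero]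
      apply Set.indicator_nonneg
      intro y _
      positivity
    by_cases hxt : 1 < |x - t|
    · rw [unif_zero hxt, mul_zero, mul_zero, norm_zero]
      apply Set.indicator_nonneg
      intro y _
      positivity
    push_neg at ht hxt
    have hmem : (x, t) ∈ Set.Icc (-((n:ℝ)+1)) ((n:ℝ)+1) ×ˢ Set.Icc (-(n:ℝ)) (n:ℝ) := by
      constructor
      · simp only [Set.mem_Icc]
        have h1 := abs_le.mp ht
        have h2 := abs_le.mp hxt
        constructor <;> linarith [h1.1, h1.2, h2.1, h2.2]
      · simp only [Set.mem_Icc]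
        have h1 := abs_le.mp ht
        exact ⟨h1.1, h1.2⟩
    rw [Set.indicator_of_mem hmem, Real.norm_eq_abs, abs_mul, abs_mul]
    have hx1 : |x| ≤ (n:ℝ)+1 := by
      have h1 := abs_le.mp ht
      have h2 := abs_le.mp hxt
      rw [abs_le]
      constructor <;> linarith [h1.1, h1.2, h2.1, h2.2]
    have : |x| ^ k ≤ ((n:ℝ)+1)^k := pow_le_pow_left₀ (abs_nonneg x) hx1 k
    rw [abs_pow]
    apply mul_le_mul this _ (by positivity) (by positivity)
    calc |F n t| * |unifDensity (x - t)| ≤ (1/2) * (1/2) := by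
          apply mul_le_mul _ _ (abs_nonneg _) (by norm_num)
          · rw [abs_of_nonneg (hnn t)]; exact hhalf t
          · rw [abs_of_nonneg (unif_nonneg _)]; exact unif_le _
      _ = 1/4 := by norm_num
  calc ∫ x : ℝ, x ^ k * F (n+1) x
      = ∫ x : ℝ, ∫ t : ℝ, x ^ k * (F n t * unifDensity (x - t)) := by
        apply MeasureTheory.integral_congr_ae
        filter_upwards with x
        rw [F_succ' n hn, ← MeasureTheory.integral_const_mul]
    _ = ∫ t : ℝ, ∫ x : ℝ, x ^ k * (F n t * unifDensity (x - t)) := key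
    _ = ∫ t : ℝ, F n t * (((t+1)^(k+1) - (t-1)^(k+1)) / (2*(k+1))) := by
        apply MeasureTheory.integral_congr_ae
        filter_upwards with t
        rw [← unif_slice t k, ← MeasureTheory.integral_const_mul]
        apply MeasureTheory.integral_congr_ae
        filter_upwards with x
        ring

noncomputable def mom (k n : ℕ) : ℝ := ∫ x : ℝ, x ^ k * F n x

lemma mom_integrable (n : ℕ) (hn : 1 ≤ n) (k : ℕ) :
    Integrable (fun x : ℝ => x ^ k * F n x) :=
  F_mul_integrable n hn _ (continuous_pow k)

lemma mom_base (k : ℕ) : mom k 1 = (1 - (-1:ℝ)^(k+1)) / (2*(k+1)) := by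
  have h := unif_slice 0 k
  simp only [sub_zero] at h
  rw [mom]
  show (∫ x : ℝ, x ^ k * unifDensity x) = _
  rw [h]
  norm_num

lemma mom0 (n : ℕ) (hn : 1 ≤ n) : mom 0 n = 1 := by
  induction n, hn using Nat.le_induction with
  | base => rw [mom_base]; norm_num
  | succ n hn ih =>
    rw [mom, mom_rec n hn 0]
    have h : (fun t : ℝ => F n t * ((t+1)^(0+1) - (t-1)^(0+1)) / (2*((0:ℕ)+1)))
        = fun t : ℝ => (1:ℝ) * (t ^ 0 * F n t) := by
      funext t; push_cast; ring
    rw [show (fun t : ℝ => F n t * (((t+1)^(0+1) - (t-1)^(0+1)) / (2*((0:ℕ)+1))))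
        = fun t : ℝ => (t:ℝ) ^ 0 * F n t by funext t; push_cast; ring]
    exact ih

lemma mom2_succ (n : ℕ) (hn : 1 ≤ n) : mom 2 (n+1) = mom 2 n + 1/3 * mom 0 n := by
  rw [mom, mom_rec n hn 2]
  rw [show (fun t:ℝ => F n t * (((t+1)^(2+1) - (t-1)^(2+1))/(2*((2:ℕ)+1))))
      = fun t:ℝ => (t^2*F n t) + (1/3)*(t^0*F n t) by funext t; push_cast; ring]
  rw [MeasureTheory.integral_add (mom_integrable n hn 2)
    ((mom_integrable n hn 0).const_mul _), MeasureTheory.integral_const_mul]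
  rfl

lemma mom4_succ (n : ℕ) (hn : 1 ≤ n) :
    mom 4 (n+1) = mom 4 n + 2 * mom 2 n + 1/5 * mom 0 n := by
  rw [mom, mom_rec n hn 4]
  rw [show (fun t:ℝ => F n t * (((t+1)^(4+1) - (t-1)^(4+1))/(2*((4:ℕ)+1))))
      = (fun t:ℝ => (t^4*F n t) + ((2:ℝ)*(t^2*F n t) + ((1/5:ℝ)*(t^0*F n t)))) by funext t; push_cast; ring]
  have h1 : Integrable (fun t:ℝ => (1/5:ℝ)*(t^0*F n t)) := by
    exact (mom_integrable n hn 0).const_mul _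
  have h0 : Integrable (fun t:ℝ => (2:ℝ)*(t^2*F n t) + ((1/5:ℝ)*(t^0*F n t))) := by
    exact ((mom_integrable n hn 2).const_mul _).add h1
  rw [MeasureTheory.integral_add (mom_integrable n hn 4) h0,
    MeasureTheory.integral_add ((mom_integrable n hn 2).const_mul _) h1,
    MeasureTheory.integral_const_mul,
    MeasureTheory.integral_const_mul]
  simp only [mom]
  ring

lemma mom6_succ (n : ℕ) (hn : 1 ≤ n) :
    mom 6 (n+1) = mom 6 n + 5 * mom 4 n + 3 * mom 2 n + 1/7 * mom 0 n := by
  rw [mom, mom_rec n hn 6]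
  rw [show (fun t:ℝ => F n t * (((t+1)^(6+1) - (t-1)^(6+1))/(2*((6:ℕ)+1))))
      = (fun t:ℝ => (t^6*F n t) + ((5:ℝ)*(t^4*F n t) + ((3:ℝ)*(t^2*F n t) + ((1/7:ℝ)*(t^0*F n t))))) by funext t; push_cast; ring]
  have h2 : Integrable (fun t:ℝ => (1/7:ℝ)*(t^0*F n t)) := by
    exact (mom_integrable n hn 0).const_mul _
  have h1 : Integrable (fun t:ℝ => (3:ℝ)*(t^2*F n t) + ((1/7:ℝ)*(t^0*F n t))) := by
    exact ((mom_integrable n hn 2).const_mul _).add h2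
  have h0 : Integrable (fun t:ℝ => (5:ℝ)*(t^4*F n t) + ((3:ℝ)*(t^2*F n t) + ((1/7:ℝ)*(t^0*F n t)))) := by
    exact ((mom_integrable n hn 4).const_mul _).add h1
  rw [MeasureTheory.integral_add (mom_integrable n hn 6) h0,
    MeasureTheory.integral_add ((mom_integrable n hn 4).const_mul _) h1,
    MeasureTheory.integral_add ((mom_integrable n hn 2).const_mul _) h2,
    MeasureTheory.integral_const_mul,
    MeasureTheory.integral_const_mul,
    MeasureTheory.integral_const_mul]
  simp only [mom]
  ring

lemma mom8_succ (n : ℕ) (hn : 1 ≤ n) :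
    mom 8 (n+1) = mom 8 n + 28/3 * mom 6 n + 14 * mom 4 n + 4 * mom 2 n + 1/9 * mom 0 n := by
  rw [mom, mom_rec n hn 8]
  rw [show (fun t:ℝ => F n t * (((t+1)^(8+1) - (t-1)^(8+1))/(2*((8:ℕ)+1))))
      = (fun t:ℝ => (t^8*F n t) + ((28/3:ℝ)*(t^6*F n t) + ((14:ℝ)*(t^4*F n t) + ((4:ℝ)*(t^2*F n t) + ((1/9:ℝ)*(t^0*F n t)))))) by funext t; push_cast; ring]
  have h3 : Integrable (fun t:ℝ => (1/9:ℝ)*(t^0*F n t)) := by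
    exact (mom_integrable n hn 0).const_mul _
  have h2 : Integrable (fun t:ℝ => (4:ℝ)*(t^2*F n t) + ((1/9:ℝ)*(t^0*F n t))) := by
    exact ((mom_integrable n hn 2).const_mul _).add h3
  have h1 : Integrable (fun t:ℝ => (14:ℝ)*(t^4*F n t) + ((4:ℝ)*(t^2*F n t) + ((1/9:ℝ)*(t^0*F n t)))) := by
    exact ((mom_integrable n hn 4).const_mul _).add h2
  have h0 : Integrable (fun t:ℝ => (28/3:ℝ)*(t^6*F n t) + ((14:ℝ)*(t^4*F n t) + ((4:ℝ)*(t^2*F n t) + ((1/9:ℝ)*(t^0*F n t))))) := by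
    exact ((mom_integrable n hn 6).const_mul _).add h1
  rw [MeasureTheory.integral_add (mom_integrable n hn 8) h0,
    MeasureTheory.integral_add ((mom_integrable n hn 6).const_mul _) h1,
    MeasureTheory.integral_add ((mom_integrable n hn 4).const_mul _) h2,
    MeasureTheory.integral_add ((mom_integrable n hn 2).const_mul _) h3,
    MeasureTheory.integral_const_mul,
    MeasureTheory.integral_const_mul,
    MeasureTheory.integral_const_mul,
    MeasureTheory.integral_const_mul]
  simp only [mom]
  ring

lemma mom2_eq (n : ℕ) (hn : 1 ≤ n) : mom 2 n = n/3 := by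
  induction n, hn using Nat.le_induction with
  | base => rw [mom_base]; norm_num
  | succ n hn ih => rw [mom2_succ n hn, ih, mom0 n hn]; push_cast; ring

lemma mom4_eq (n : ℕ) (hn : 1 ≤ n) : mom 4 n = (n:ℝ)^2/3 - 2*n/15 := by
  induction n, hn using Nat.le_induction with
  | base => rw [mom_base]; norm_num
  | succ n hn ih =>
    rw [mom4_succ n hn, ih, mom0 n hn, mom2_eq n hn]; push_cast; ring

lemma mom6_eq (n : ℕ) (hn : 1 ≤ n) :
    mom 6 n = 5*(n:ℝ)^3/9 - 2*(n:ℝ)^2/3 + 16*n/63 := by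
  induction n, hn using Nat.le_induction with
  | base => rw [mom_base]; norm_num
  | succ n hn ih =>
    rw [mom6_succ n hn, ih, mom0 n hn, mom2_eq n hn, mom4_eq n hn]; push_cast; ring

lemma mom8_eq (n : ℕ) (hn : 1 ≤ n) :
    mom 8 n = 35*(n:ℝ)^4/27 - 28*(n:ℝ)^3/9 + 404*(n:ℝ)^2/135 - 16*n/15 := by
  induction n, hn using Nat.le_induction with
  | base => rw [mom_base]; norm_num
  | succ n hn ih =>
    rw [mom8_succ n hn, ih, mom0 n hn, mom2_eq n hn, mom4_eq n hn, mom6_eq n hn]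
    push_cast; ring

lemma F_rep (n : ℕ) (hn : 1 ≤ n) (x : ℝ) :
    F (n+1) x = (1/2) * ∫ t in (x-1)..(x+1), F n t := by
  rw [F_succ' n hn]
  have h : (fun t => F n t * unifDensity (x - t))
      = (Set.Icc (x-1) (x+1)).indicator (fun t => F n t * (1/2)) := by
    funext t
    rw [unifDensity, Set.indicator]
    by_cases ht : t ∈ Set.Icc (x-1) (x+1)
    · rw [if_pos ht, if_pos]
      simp only [Set.mem_Icc] at ht ⊢
      constructor <;> linarith [ht.1, ht.2]
    · rw [if_neg ht, if_neg, mul_zero]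
      simp only [Set.mem_Icc] at ht ⊢
      intro hc
      exact ht ⟨by linarith [hc.2], by linarith [hc.1]⟩
  rw [h, MeasureTheory.integral_indicator measurableSet_Icc,
    MeasureTheory.integral_Icc_eq_integral_Ioc,
    ← intervalIntegral.integral_of_le (by linarith : x - 1 ≤ x + 1),
    intervalIntegral.integral_mul_const]
  ring

lemma F_even' (n : ℕ) (hn : 1 ≤ n) : ∀ x : ℝ, F n (-x) = F n x := by
  induction n, hn using Nat.le_induction with
  | base =>
    intro x
    show unifDensity (-x) = unifDensity x
    unfold unifDensity
    simp only [Set.mem_Icc]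
    by_cases h : -1 ≤ x ∧ x ≤ 1
    · rw [if_pos, if_pos h]; constructor <;> linarith [h.1, h.2]
    · rw [if_neg, if_neg h]; intro hc; exact h ⟨by linarith [hc.2], by linarith [hc.1]⟩
  | succ n hn ih =>
    intro x
    rw [F_rep n hn, F_rep n hn]
    have : ∫ t in (-x-1)..(-x+1), F n t = ∫ t in (x-1)..(x+1), F n t := by
      have h1 : ∫ t in (x-1)..(x+1), F n t = ∫ t in (x-1)..(x+1), F n (-t) := by
        apply intervalIntegral.integral_congr
        intro t _
        exact (ih t).symm
      rw [h1, intervalIntegral.integral_comp_neg (fun t => F n t)]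
      have : -(x+1) = -x-1 := by ring
      rw [this]
      have : -(x-1) = -x+1 := by ring
      rw [this]
    rw [this]

lemma F_even (n : ℕ) (hn : 1 ≤ n) (x : ℝ) : F n (-x) = F n x := F_even' n hn x

lemma F_anti' (n : ℕ) (hn : 1 ≤ n) : ∀ x y : ℝ, 0 ≤ x → x ≤ y →
    F n y ≤ F n x := by
  induction n, hn using Nat.le_induction with
  | base =>
    intro x y hx hxy
    show unifDensity y ≤ unifDensity x
    by_cases h : x ≤ 1
    · have : unifDensity x = 1/2 := by
        rw [unifDensity, if_pos]; exact ⟨by linarith, h⟩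
      rw [this]
      exact unif_le y
    · push_neg at h
      rw [unif_zero (show 1 < |y| by rw [abs_of_nonneg (by linarith : (0:ℝ) ≤ y)]; linarith),
        unif_zero (show 1 < |x| by rw [abs_of_nonneg hx]; exact h)]
  | succ n hn ih =>
    intro x y hx hxy
    rw [F_rep n hn, F_rep n hn]
    have hint : ∀ a b : ℝ, IntervalIntegrable (F n) volume a b :=
      fun a b => (F_integrable n hn).intervalIntegrable
    have e1 : ∫ t in (x-1)..(y+1), F n t
        = (∫ t in (x-1)..(x+1), F n t) + ∫ t in (x+1)..(y+1), F n t :=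
      (intervalIntegral.integral_add_adjacent_intervals (hint _ _) (hint _ _)).symm
    have e2 : ∫ t in (x-1)..(y+1), F n t
        = (∫ t in (x-1)..(y-1), F n t) + ∫ t in (y-1)..(y+1), F n t :=
      (intervalIntegral.integral_add_adjacent_intervals (hint _ _) (hint _ _)).symm
    have e3 : ∫ t in (x+1)..(y+1), F n t = ∫ t in (x-1)..(y-1), F n (t+2) := by
      rw [intervalIntegral.integral_comp_add_right (fun t => F n t) 2,
        show x - 1 + 2 = x + 1 by ring, show y - 1 + 2 = y + 1 by ring]
    have e4 : ∫ t in (x-1)..(y-1), F n (t+2) ≤ ∫ t in (x-1)..(y-1), F n t := by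
      apply intervalIntegral.integral_mono_on (by linarith)
        ((F_integrable n hn).comp_add_right 2).intervalIntegrable (hint _ _)
      intro t ht
      obtain ⟨ht1, _⟩ := ht
      by_cases h0 : 0 ≤ t
      · exact ih t (t+2) h0 (by linarith)
      · push_neg at h0
        have : F n (t+2) ≤ F n (-t) := ih (-t) (t+2) (by linarith) (by linarith)
        rwa [F_even n hn] at this
    nlinarith [e1, e2, e3, e4]

lemma F_mono_abs (n : ℕ) (hn : 1 ≤ n) {a b : ℝ} (h : |a| ≤ |b|) : F n b ≤ F n a := by
  have ha : F n a = F n |a| := by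
    rcases abs_choice a with h' | h'
    · rw [h']
    · rw [h', F_even n hn]
  have hb : F n b = F n |b| := by
    rcases abs_choice b with h' | h'
    · rw [h']
    · rw [h', F_even n hn]
  rw [ha, hb]
  exact F_anti' n hn |a| |b| (abs_nonneg a) h

lemma F_small (n : ℕ) (hn : 1 ≤ n) : ∀ x : ℝ, |x| ≤ 3*n/4 → (1/8:ℝ)^n ≤ F n x := by
  induction n, hn using Nat.le_induction with
  | base =>
    intro x hx
    push_cast at hx
    have : unifDensity x = 1/2 := by
      rw [unifDensity, if_pos]
      rw [abs_le] at hx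
      exact ⟨by linarith [hx.1], by linarith [hx.2]⟩
    show (1/8:ℝ)^1 ≤ unifDensity x
    rw [this]; norm_num
  | succ n hn ih =>
    intro x hx
    push_cast at hx
    rw [abs_le] at hx
    obtain ⟨hx1, hx2⟩ := hx
    have hn1 : (1:ℝ) ≤ n := by exact_mod_cast hn
    set a := max (x-1) (-(3*(n:ℝ)/4)) with ha
    set b := min (x+1) (3*(n:ℝ)/4) with hb
    have hab : a + 1/4 ≤ b := by
      rcases max_cases (x-1) (-(3*(n:ℝ)/4)) with ⟨h1, h2⟩ | ⟨h1, h2⟩ <;>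
        rcases min_cases (x+1) (3*(n:ℝ)/4) with ⟨h3, h4⟩ | ⟨h3, h4⟩ <;>
        rw [ha, hb, h1, h3] <;> linarith
    have hxa : x - 1 ≤ a := le_max_left _ _
    have hbx : b ≤ x + 1 := min_le_left _ _
    have hint : ∀ c d : ℝ, IntervalIntegrable (F n) volume c d :=
      fun c d => (F_integrable n hn).intervalIntegrable
    have key : (1/4:ℝ) * (1/8)^n ≤ ∫ t in (x-1)..(x+1), F n t := by
      have e1 : ∫ t in (x-1)..(x+1), F n t
          = (∫ t in (x-1)..a, F n t) + (∫ t in a..b, F n t) + ∫ t in b..(x+1), F n t := by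
        rw [intervalIntegral.integral_add_adjacent_intervals (hint _ _) (hint _ _),
          intervalIntegral.integral_add_adjacent_intervals (hint _ _) (hint _ _)]
      have p1 : 0 ≤ ∫ t in (x-1)..a, F n t :=
        intervalIntegral.integral_nonneg hxa (fun t _ => F_nonneg n hn t)
      have p3 : 0 ≤ ∫ t in b..(x+1), F n t :=
        intervalIntegral.integral_nonneg hbx (fun t _ => F_nonneg n hn t)
      have p2 : (1/4:ℝ) * (1/8)^n ≤ ∫ t in a..b, F n t := by
        have hconst : ∫ t in a..b, ((1/8:ℝ)^n) = (b - a) * (1/8)^n := by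
          rw [intervalIntegral.integral_const, smul_eq_mul]
        have hmono : ∫ t in a..b, ((1/8:ℝ)^n) ≤ ∫ t in a..b, F n t := by
          apply intervalIntegral.integral_mono_on (by linarith) intervalIntegrable_const
            (hint _ _)
          intro t ht
          apply ih t
          rw [abs_le]
          constructor
          · calc -(3*(n:ℝ)/4) ≤ a := le_max_right _ _
              _ ≤ t := ht.1
          · calc t ≤ b := ht.2
              _ ≤ 3*(n:ℝ)/4 := min_le_right _ _
        rw [hconst] at hmono
        nlinarith [pow_pos (show (0:ℝ) < 1/8 by norm_num) n]
      linarith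
    rw [F_rep n hn x]
    calc ((1/8:ℝ))^(n+1) = (1/2) * ((1/4) * (1/8)^n) := by ring
      _ ≤ (1/2) * ∫ t in (x-1)..(x+1), F n t := by linarith

set_option maxHeartbeats 1000000 in
lemma F_large (n : ℕ) (hn : 200 ≤ n) {x : ℝ} (hx : |x| ≤ Real.sqrt n) :
    1/(104857600 * Real.sqrt n) ≤ F n x := by
  have hn1 : 1 ≤ n := le_trans (by norm_num) hn
  set ν : ℝ := (n : ℝ) with hνdef
  have hν : (200:ℝ) ≤ ν := by rw [hνdef]; exact_mod_cast hn
  have hν0 : (0:ℝ) < ν := by linarith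
  have hνne : ν ≠ 0 := ne_of_gt hν0
  set r : ℝ := Real.sqrt ν with hrdef
  have hr0 : 0 ≤ r := Real.sqrt_nonneg ν
  have hr2 : r^2 = ν := Real.sq_sqrt (le_of_lt hν0)
  have hrpos : 0 < r := Real.sqrt_pos.mpr hν0
  set G : ℝ → ℝ := fun s => (s^2 - ν/2)^2 * s^2 * (1 - s^2/(64*ν)) with hGdef
  have hGc : Continuous G := by
    apply Continuous.mul
    · exact (((continuous_pow 2).sub continuous_const).pow 2).mul (continuous_pow 2)
    · exact continuous_const.sub ((continuous_pow 2).div_const _)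
  have hInt : Integrable (fun s => G s * F n s) := F_mul_integrable n hn1 G hGc
  -- Step 1: integral identity
  have hdecomp : (fun s => G s * F n s) = fun s : ℝ =>
      (-1/(64*ν))*(s^8*F n s) + ((65/64)*(s^6*F n s) + ((-ν-ν/256)*(s^4*F n s)
        + ((ν^2/4)*(s^2*F n s)))) := by
    funext s
    have hGs : G s = (s^2 - ν/2)^2 * s^2 * (1 - s^2/(64*ν)) := rfl
    have : ((s^2 - ν/2)^2 * s^2 * (1 - s^2/(64*ν)))
        = (-1/(64*ν))*s^8 + ((65/64)*s^6 + ((-ν-ν/256)*s^4 + ((ν^2/4)*s^2))) := by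
      field_simp
      ring
    rw [hGs, this]
    ring
  have h8 : Integrable (fun s : ℝ => (ν^2/4)*(s^2*F n s)) :=
    (mom_integrable n hn1 2).const_mul _
  have h7 : Integrable (fun s : ℝ => (-ν-ν/256)*(s^4*F n s) + ((ν^2/4)*(s^2*F n s))) :=
    ((mom_integrable n hn1 4).const_mul _).add h8
  have h6 : Integrable (fun s : ℝ => (65/64)*(s^6*F n s) + ((-ν-ν/256)*(s^4*F n s)
      + ((ν^2/4)*(s^2*F n s)))) := ((mom_integrable n hn1 6).const_mul _).add h7
  have hI : ∫ s : ℝ, G s * F n s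
      = (-1/(64*ν))*mom 8 n + ((65/64)*mom 6 n + ((-ν-ν/256)*mom 4 n
        + ((ν^2/4)*mom 2 n))) := by
    rw [hdecomp,
      MeasureTheory.integral_add ((mom_integrable n hn1 8).const_mul _) h6,
      MeasureTheory.integral_add ((mom_integrable n hn1 6).const_mul _) h7,
      MeasureTheory.integral_add ((mom_integrable n hn1 4).const_mul _) h8,
      MeasureTheory.integral_const_mul, MeasureTheory.integral_const_mul,
      MeasureTheory.integral_const_mul, MeasureTheory.integral_const_mul]
    simp only [mom]
  -- Step 2: lower bound on the integral
  have hlow : ν^3/4 + ν^3/25 ≤ ∫ s : ℝ, G s * F n s := by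
    rw [hI, mom2_eq n hn1, mom4_eq n hn1, mom6_eq n hn1, mom8_eq n hn1, ← hνdef]
    have key : (-1/(64*ν))*(35*ν^4/27 - 28*ν^3/9 + 404*ν^2/135 - 16*ν/15)
        + ((65/64)*(5*ν^3/9 - 2*ν^2/3 + 16*ν/63) + ((-ν-ν/256)*(ν^2/3 - 2*ν/15)
        + ((ν^2/4)*(ν/3)))) - (ν^3/4 + ν^3/25)
        = ((463/2700)*ν^3 - (2849/90)*ν^2 + (12772/945)*ν + 16/15)/64 := by
      field_simp
      ring
    have hQ : 0 ≤ (463/2700)*ν^3 - (2849/90)*ν^2 + (12772/945)*ν + 16/15 := by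
      have h1 : 0 ≤ ν^2 * ((463/2700)*ν - 2849/90) := by
        apply mul_nonneg (sq_nonneg ν)
        linarith
      nlinarith [h1, hν0]
    linarith [key, hQ]
  -- Step 3: splitting the integral
  set S1 : Set ℝ := Set.Icc (-(8*r)) (8*r) with hS1def
  set A : Set ℝ := Set.Icc (-r) r with hAdef
  set D : Set ℝ := S1 \ A with hDdef
  have hAS1 : A ⊆ S1 := Set.Icc_subset_Icc (by linarith) (by linarith)
  have hmS1 : MeasurableSet S1 := measurableSet_Icc
  have hmA : MeasurableSet A := measurableSet_Icc
  have hmD : MeasurableSet D := hmS1.diff hmA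
  have htot : ∫ s : ℝ, F n s = 1 := by
    have := mom0 n hn1
    rw [mom] at this
    simpa using this
  have htail : ∫ s in S1ᶜ, G s * F n s ≤ 0 := by
    apply MeasureTheory.setIntegral_nonpos hmS1.compl
    intro s hs
    have habs : 8*r < |s| := abs_gt_of_not_mem_Icc hs
    have hs2 : 64*ν < s^2 := by
      have := sq_abs s
      nlinarith [abs_nonneg s]
    apply mul_nonpos_of_nonpos_of_nonneg _ (F_nonneg n hn1 s)
    have hGs : G s = (s^2 - ν/2)^2 * s^2 * (1 - s^2/(64*ν)) := rfl
    rw [hGs]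
    apply mul_nonpos_of_nonneg_of_nonpos
    · positivity
    · have : 1 ≤ s^2/(64*ν) := by
        rw [le_div_iff₀ (by linarith : (0:ℝ) < 64*ν)]
        linarith
      linarith
  have hdiff : ∫ s in D, G s * F n s
      = (∫ s in S1, G s * F n s) - ∫ s in A, G s * F n s :=
    MeasureTheory.integral_diff hmA hInt.integrableOn hAS1
  have hsplit : ∫ s : ℝ, G s * F n s
      = (∫ s in S1, G s * F n s) + ∫ s in S1ᶜ, G s * F n s :=
    (MeasureTheory.integral_add_compl hmS1 hInt).symm
  have hA : ∫ s in A, G s * F n s ≤ ν^3/4 := by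
    have hmono : ∫ s in A, G s * F n s ≤ ∫ s in A, (ν^3/4) * F n s := by
      apply MeasureTheory.setIntegral_mono_on hInt.integrableOn
        ((F_integrable n hn1).const_mul _).integrableOn hmA
      intro s hs
      apply mul_le_mul_of_nonneg_right _ (F_nonneg n hn1 s)
      rw [hAdef] at hs
      obtain ⟨hs1, hs2⟩ := hs
      have hs2' : s^2 ≤ ν := by nlinarith
      have hY0 : 0 ≤ 1 - s^2/(64*ν) := by
        rw [sub_nonneg, div_le_one (by linarith : (0:ℝ) < 64*ν)]
        linarith
      have hY1 : 1 - s^2/(64*ν) ≤ 1 := by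
        have : 0 ≤ s^2/(64*ν) := by positivity
        linarith
      have hX : (s^2 - ν/2)^2 * s^2 ≤ ν^3/4 := by
        have h1 : (s^2 - ν/2)^2 ≤ (ν/2)^2 := by
          apply sq_le_sq'
          · nlinarith [sq_nonneg s]
          · nlinarith [sq_nonneg s]
        nlinarith [sq_nonneg s, sq_nonneg (s^2 - ν/2)]
      have hGs : G s = (s^2 - ν/2)^2 * s^2 * (1 - s^2/(64*ν)) := rfl
      rw [hGs]
      calc (s^2 - ν/2)^2 * s^2 * (1 - s^2/(64*ν))
          ≤ (s^2 - ν/2)^2 * s^2 * 1 :=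
            mul_le_mul_of_nonneg_left hY1 (by positivity)
        _ = (s^2 - ν/2)^2 * s^2 := by ring
        _ ≤ ν^3/4 := hX
    have h2 : ∫ s in A, (ν^3/4) * F n s = (ν^3/4) * ∫ s in A, F n s := by
      exact MeasureTheory.integral_const_mul _ _
    have h3 : ∫ s in A, F n s ≤ 1 := by
      rw [← htot]
      apply MeasureTheory.setIntegral_le_integral (F_integrable n hn1)
      filter_upwards with s
      exact F_nonneg n hn1 s
    calc ∫ s in A, G s * F n s ≤ (ν^3/4) * ∫ s in A, F n s := by rw [← h2]; exact hmono
      _ ≤ ν^3/4 * 1 := by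
          apply mul_le_mul_of_nonneg_left h3 (by positivity)
      _ = ν^3/4 := by ring
  have hDbound : ∫ s in D, G s * F n s ≤ 262144*ν^3 * ∫ s in D, F n s := by
    have h2 : ∫ s in D, 262144*ν^3 * F n s = 262144*ν^3 * ∫ s in D, F n s :=
      MeasureTheory.integral_const_mul _ _
    rw [← h2]
    apply MeasureTheory.setIntegral_mono_on hInt.integrableOn
      ((F_integrable n hn1).const_mul _).integrableOn hmD
    intro s hs
    apply mul_le_mul_of_nonneg_right _ (F_nonneg n hn1 s)
    obtain ⟨hsS1, hsA⟩ := hs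
    rw [hS1def] at hsS1
    obtain ⟨hb1, hb2⟩ := hsS1
    have habs : r < |s| := abs_gt_of_not_mem_Icc hsA
    have hs2lo : ν < s^2 := by
      have := sq_abs s
      nlinarith [abs_nonneg s]
    have hs2hi : s^2 ≤ 64*ν := by nlinarith
    have hY0 : 0 ≤ 1 - s^2/(64*ν) := by
      rw [sub_nonneg, div_le_one (by linarith : (0:ℝ) < 64*ν)]
      linarith
    have hY1 : 1 - s^2/(64*ν) ≤ 1 := by
      have : 0 ≤ s^2/(64*ν) := by positivity
      linarith
    have hX : (s^2 - ν/2)^2 * s^2 ≤ 262144*ν^3 := by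
      have h1 : (s^2 - ν/2)^2 ≤ (s^2)^2 := by
        apply sq_le_sq'
        · nlinarith
        · nlinarith
      have h3 : (s^2)^3 ≤ (64*ν)^3 :=
        pow_le_pow_left₀ (sq_nonneg s) hs2hi 3
      nlinarith [sq_nonneg s]
    have hGs : G s = (s^2 - ν/2)^2 * s^2 * (1 - s^2/(64*ν)) := rfl
    rw [hGs]
    calc (s^2 - ν/2)^2 * s^2 * (1 - s^2/(64*ν))
        ≤ (s^2 - ν/2)^2 * s^2 * 1 :=
          mul_le_mul_of_nonneg_left hY1 (by positivity)
      _ = (s^2 - ν/2)^2 * s^2 := by ring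
      _ ≤ 262144*ν^3 := hX
  -- combine to lower bound P1
  set P1 : ℝ := ∫ s in D, F n s with hP1def
  have hP1 : 1/6553600 ≤ P1 := by
    have hch : ν^3/4 + ν^3/25 ≤ ν^3/4 + 262144*ν^3 * P1 := by
      calc ν^3/4 + ν^3/25 ≤ ∫ s : ℝ, G s * F n s := hlow
        _ = (∫ s in S1, G s * F n s) + ∫ s in S1ᶜ, G s * F n s := hsplit
        _ ≤ ∫ s in S1, G s * F n s := by linarith [htail]
        _ = (∫ s in A, G s * F n s) + ∫ s in D, G s * F n s := by linarith [hdiff]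
        _ ≤ ν^3/4 + 262144*ν^3 * P1 := by
            rw [hP1def]
            linarith [hA, hDbound]
    have hν3 : (0:ℝ) < ν^3 := by positivity
    have : ν^3 * (1/25) ≤ ν^3 * (262144 * P1) := by nlinarith [hch]
    have := le_of_mul_le_mul_left this hν3
    linarith
  -- Step 4: P1 ≤ 16 r * F n r
  have hP1up : P1 ≤ 16*r * F n r := by
    have hconstInt : IntegrableOn (fun _ : ℝ => F n r) D := by
      refine (integrableOn_const_iff (by simp)).mpr ?_
      right
      calc volume D ≤ volume S1 := measure_mono Set.diff_subset
        _ < ⊤ := measure_Icc_lt_top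
    have hm : ∫ s in D, F n s ≤ ∫ s in D, F n r := by
      apply MeasureTheory.setIntegral_mono_on (F_integrable n hn1).integrableOn
        hconstInt hmD
      intro s hs
      apply F_mono_abs n hn1
      rw [abs_of_nonneg hr0]
      exact le_of_lt (abs_gt_of_not_mem_Icc hs.2)
    have hc : ∫ s in D, F n r = (volume D).toReal * F n r := by
      rw [MeasureTheory.setIntegral_const, smul_eq_mul]; rfl
    have hvol : (volume D).toReal ≤ 16*r := by
      apply ENNReal.toReal_le_of_le_ofReal (by linarith)
      calc volume D ≤ volume S1 := measure_mono Set.diff_subset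
        _ = ENNReal.ofReal (8*r - -(8*r)) := Real.volume_Icc
        _ = ENNReal.ofReal (16*r) := by congr 1; ring
    calc P1 ≤ (volume D).toReal * F n r := by rw [← hc]; exact hm
      _ ≤ 16*r * F n r := by
          apply mul_le_mul_of_nonneg_right hvol (F_nonneg n hn1 r)
  -- Step 5: conclude
  have hFr : 1/6553600 ≤ 16*r * F n r := le_trans hP1 hP1up
  have hFx : F n r ≤ F n x := by
    apply F_mono_abs n hn1
    rw [abs_of_nonneg hr0]
    exact hx
  rw [div_le_iff₀ (by positivity : (0:ℝ) < 104857600 * r)]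
  nlinarith [mul_le_mul_of_nonneg_left hFx (by positivity : (0:ℝ) ≤ 6553600*r)]

theorem sumUnifDensity_lower :
    ∃ cl : ℝ, 0 < cl ∧ ∀ n : ℕ, 1 ≤ n →
      ∀ x ∈ Set.Icc (-(Real.sqrt n)) (Real.sqrt n),
        cl / Real.sqrt n ≤ sumUnifDensity n x := by
  refine ⟨(1/8:ℝ)^200, by positivity, ?_⟩
  intro n hn x hx
  obtain ⟨hx1, hx2⟩ := hx
  have hxabs : |x| ≤ Real.sqrt n := abs_le.mpr ⟨hx1, hx2⟩
  have hn1R : (1:ℝ) ≤ (n:ℝ) := by exact_mod_cast hn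
  have hs1 : (1:ℝ) ≤ Real.sqrt n := by
    rw [show (1:ℝ) = Real.sqrt 1 from Real.sqrt_one.symm]
    exact Real.sqrt_le_sqrt hn1R
  have hcl0 : (0:ℝ) < (1/8:ℝ)^200 := by positivity
  by_cases hbig : 200 ≤ n
  · have h1 := F_large n hbig hxabs
    have hcle : ((1:ℝ)/8)^200 ≤ 1/104857600 := by
      calc ((1:ℝ)/8)^200 ≤ (1/8)^9 :=
            pow_le_pow_of_le_one (by norm_num) (by norm_num) (by norm_num)
        _ ≤ 1/104857600 := by norm_num
    calc (1/8:ℝ)^200 / Real.sqrt n ≤ (1/104857600) / Real.sqrt n := by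
          gcongr
      _ = 1/(104857600 * Real.sqrt n) := by rw [div_div]
      _ ≤ sumUnifDensity n x := h1
  · push_neg at hbig
    by_cases h2 : n = 1
    · subst h2
      simp only [Nat.cast_one, Real.sqrt_one, div_one] at hx1 hx2 ⊢
      have heq : sumUnifDensity 1 x = unifDensity x := rfl
      rw [heq, unifDensity, if_pos (Set.mem_Icc.mpr ⟨hx1, hx2⟩)]
      have h9 : ((1:ℝ)/8)^200 ≤ (1/8)^1 :=
        pow_le_pow_of_le_one (by norm_num) (by norm_num) (by norm_num)
      norm_num at h9 ⊢
    · have hn2 : 2 ≤ n := by omega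
      have hn2R : (2:ℝ) ≤ (n:ℝ) := by exact_mod_cast hn2
      have hsqle : Real.sqrt n ≤ 3*(n:ℝ)/4 := by
        rw [show (3*(n:ℝ)/4) = Real.sqrt ((3*(n:ℝ)/4)^2) from
          (Real.sqrt_sq (by positivity)).symm]
        apply Real.sqrt_le_sqrt
        nlinarith
      have hsmall := F_small n hn x (le_trans hxabs hsqle)
      have hpow : ((1:ℝ)/8)^200 ≤ (1/8)^n :=
        pow_le_pow_of_le_one (by norm_num) (by norm_num) (by omega)
      calc (1/8:ℝ)^200 / Real.sqrt n ≤ (1/8:ℝ)^200 / 1 := by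
            apply div_le_div_of_nonneg_left (le_of_lt hcl0) (by linarith) hs1
        _ = (1/8:ℝ)^200 := by rw [div_one]
        _ ≤ (1/8:ℝ)^n := hpow
        _ ≤ sumUnifDensity n x := hsmall
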